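/- Let p be a prime and let G be a finite non-abelian solvable group that is a 𝒫₂⁺(p)-group with respect to some pair, in which every normal p-subgroup is trivial. Let H be a Hall {2,3}-subgroup of G, let K be a Hall {2,3}'-subgroup of G which is normal in G, and let a, b ∈ K satisfy ⟨a⟩ = [K,H] = [⟨a⟩,H], ⟨b⟩ = C_K(H), K = ⟨a⟩⟨b⟩ with ⟨a⟩ ∩ ⟨b⟩ = 1, and gcd(|a|,|b|) = 1 (so G = ⟨a⟩:(⟨b⟩ × H)). Let ρ₀, τ₀ ∈ H with ⟨ρ₀,τ₀⟩ = H, τ₀ of order 2, and τ₀⁻¹aτ₀ = a⁻¹, and let i, j be integers with gcd(i,|a|) = gcd(j,|b|) = 1. Let a′ be a generator of the centralizer C_{⟨a⟩}(⟨bρ₀⟩). Then the order of aⁱbʲρ₀ equals |a′|·|b|·|ρ₀|, and the order of the commutator [aⁱbʲρ₀, τ₀] equals |a|·|[ρ₀,τ₀]|. -/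

import Mathlib

open Pointwise
open scoped commutatorElement

/-- A group is cyclic or dihedral. -/
def IsCyclicOrDihedral (H : Type*) [Group H] : Prop :=
  IsCyclic H ∨ ∃ n : ℕ, 0 < n ∧ Nonempty (H ≃* DihedralGroup n)

/-- `G` is a `𝒫₀(p)`-group with respect to `(ρ, τ)`. -/
def IsP0 (p : ℕ) {G : Type*} [Group G] (ρ τ : G) : Prop :=
  orderOf τ = 2 ∧ Subgroup.closure {ρ, τ} = ⊤ ∧
    ∃ n : ℕ, 0 < n ∧
      Nat.card G / orderOf ρ +
          Nat.card G / Nat.card (Subgroup.closure {τ, ρ⁻¹ * τ * ρ} : Subgroup G) +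
          p ^ n =
        Nat.card G / 2

/-- `G` is a `𝒫₁(p)`-group with respect to subgroups `H₁` and `H₂`. -/
def IsP1With (p : ℕ) {G : Type*} [Group G] (H₁ H₂ : Subgroup G) : Prop :=
  IsCyclicOrDihedral H₁ ∧ IsCyclicOrDihedral H₂ ∧
    ∃ n : ℕ, Nat.card G = p ^ n * Nat.lcm (Nat.card H₁) (Nat.card H₂)

/-- `G` is a `𝒫₁(p)`-group. -/
def IsP1 (p : ℕ) (G : Type*) [Group G] : Prop :=
  ∃ H₁ H₂ : Subgroup G, IsP1With p H₁ H₂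

/-- `G` is a `𝒫₁⁺(p)`-group with respect to `(ρ, τ)`. -/
def IsP1Plus (p : ℕ) {G : Type*} [Group G] (ρ τ : G) : Prop :=
  orderOf τ ≤ 2 ∧ Subgroup.closure {ρ, τ} = ⊤ ∧
    (Odd p → Subgroup.closure {ρ⁻¹ * τ⁻¹ * ρ * τ, ρ} = ⊤) ∧
    IsP1With p (Subgroup.closure {τ, ρ⁻¹ * τ * ρ}) (Subgroup.zpowers ρ)

/-- `G` is a `𝒫₂(p)`-group. -/
def IsP2 (p : ℕ) (G : Type*) [Group G] : Prop :=
  ∀ r : ℕ, r.Prime → r ≠ p → ∀ S : Sylow r G, IsCyclicOrDihedral (S : Subgroup G)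

/-- `G` is a `𝒫₂⁺(p)`-group with respect to `(ρ, τ)`. -/
def IsP2Plus (p : ℕ) {G : Type*} [Group G] (ρ τ : G) : Prop :=
  orderOf τ ≤ 2 ∧ Subgroup.closure {ρ, τ} = ⊤ ∧
    (Odd p → Subgroup.closure {ρ⁻¹ * τ⁻¹ * ρ * τ, ρ} = ⊤) ∧
    IsP2 p G

/-- A Hall `{2,3}`-subgroup. -/
def IsHall23 {G : Type*} [Group G] (H : Subgroup G) : Prop :=
  (∃ i j : ℕ, Nat.card H = 2 ^ i * 3 ^ j) ∧ Nat.Coprime H.index 6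

/-- A Hall `{2,3}'`-subgroup. -/
def IsHall23' {G : Type*} [Group G] (K : Subgroup G) : Prop :=
  Nat.Coprime (Nat.card K) 6 ∧ ∃ i j : ℕ, K.index = 2 ^ i * 3 ^ j

/-- The projective special linear group of degree 2 over `R`. -/
abbrev ProjSL2 (R : Type*) [CommRing R] : Type _ :=
  Matrix.SpecialLinearGroup (Fin 2) R ⧸
    Subgroup.center (Matrix.SpecialLinearGroup (Fin 2) R)

/-- The projective general linear group of degree 2 over `R`. -/
abbrev ProjGL2 (R : Type*) [CommRing R] : Type _ :=
  Matrix.GeneralLinearGroup (Fin 2) R ⧸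
    Subgroup.center (Matrix.GeneralLinearGroup (Fin 2) R)

/-- With the standard decomposition `G = ⟨a⟩:(⟨b⟩ × H)` of a finite non-abelian solvable
`𝒫₂⁺(p)`-group (with respect to some pair) with trivial normal `p`-subgroups: if
`⟨ρ₀, τ₀⟩ = H`, `|τ₀| = 2`, `τ₀⁻¹aτ₀ = a⁻¹`, `gcd(i,|a|) = gcd(j,|b|) = 1`, and `a′`
generates `C_{⟨a⟩}(⟨bρ₀⟩)`, then `|aⁱbʲρ₀| = |a′|·|b|·|ρ₀|` and
`|[aⁱbʲρ₀, τ₀]| = |a|·|[ρ₀, τ₀]|`. -/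
theorem stmt14 {G : Type*} [Group G] [Finite G] {p : ℕ} (hp : p.Prime)
    (hna : ¬ ∀ x y : G, x * y = y * x) (hsolv : IsSolvable G)
    (h : ∃ ρ₁ τ₁ : G, IsP2Plus p ρ₁ τ₁)
    (hOp : ∀ N : Subgroup G, N.Normal → IsPGroup p N → N = ⊥)
    (K H : Subgroup G) (hK : IsHall23' K) (hH : IsHall23 H) (hKn : K.Normal)
    (a b : G) (ha : a ∈ K) (hb : b ∈ K)
    (haKH : ⁅K, H⁆ = Subgroup.zpowers a)
    (haH : ⁅Subgroup.zpowers a, H⁆ = Subgroup.zpowers a)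
    (hbC : K ⊓ Subgroup.centralizer (H : Set G) = Subgroup.zpowers b)
    (hKab : (K : Set G) = (Subgroup.zpowers a : Set G) * (Subgroup.zpowers b : Set G))
    (hab : Subgroup.zpowers a ⊓ Subgroup.zpowers b = ⊥)
    (hcop : Nat.Coprime (orderOf a) (orderOf b))
    (ρ₀ τ₀ : G) (hρ₀ : ρ₀ ∈ H) (hτ₀ : τ₀ ∈ H)
    (hgen : Subgroup.closure {ρ₀, τ₀} = H) (hτ₀2 : orderOf τ₀ = 2)
    (hinv : τ₀⁻¹ * a * τ₀ = a⁻¹)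
    (i j : ℕ) (hi : Nat.gcd i (orderOf a) = 1) (hj : Nat.gcd j (orderOf b) = 1)
    (a' : G)
    (ha' : Subgroup.zpowers a' =
      Subgroup.zpowers a ⊓ Subgroup.centralizer (Subgroup.zpowers (b * ρ₀) : Set G)) :
    orderOf (a ^ i * b ^ j * ρ₀) = orderOf a' * (orderOf b * orderOf ρ₀) ∧
      orderOf ((a ^ i * b ^ j * ρ₀)⁻¹ * τ₀⁻¹ * (a ^ i * b ^ j * ρ₀) * τ₀) =
        orderOf a * orderOf (ρ₀⁻¹ * τ₀⁻¹ * ρ₀ * τ₀) := by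
  classical
  -- ### Basic setup
  obtain ⟨u, v, hHcard⟩ := hH.1
  -- b centralizes H
  have hbmem : b ∈ K ⊓ Subgroup.centralizer (H : Set G) := by
    rw [hbC]; exact Subgroup.mem_zpowers b
  have hbcent : ∀ g ∈ H, Commute b g := fun g hg =>
    Commute.symm (Subgroup.mem_centralizer_iff.mp hbmem.2 g hg)
  -- coprimality facts for orderOf a
  have hm6 : Nat.Coprime (orderOf a) 6 :=
    Nat.Coprime.coprime_dvd_left (Subgroup.orderOf_dvd_natCard K ha) hK.1
  have hm2 : Nat.Coprime (orderOf a) 2 := hm6.coprime_dvd_right (by norm_num)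
  have hm3 : Nat.Coprime (orderOf a) 3 := hm6.coprime_dvd_right (by norm_num)
  have hmH : ∀ g ∈ H, Nat.Coprime (orderOf a) (orderOf g) := by
    intro g hg
    exact ((hm2.pow_right u).mul_right (hm3.pow_right v)).coprime_dvd_right
      (hHcard ▸ Subgroup.orderOf_dvd_natCard H hg)
  have hb6 : Nat.Coprime (orderOf b) 6 :=
    Nat.Coprime.coprime_dvd_left (Subgroup.orderOf_dvd_natCard K hb) hK.1
  have hb2 : Nat.Coprime (orderOf b) 2 := hb6.coprime_dvd_right (by norm_num)
  have hb3 : Nat.Coprime (orderOf b) 3 := hb6.coprime_dvd_right (by norm_num)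
  have hbH : ∀ g ∈ H, Nat.Coprime (orderOf b) (orderOf g) := by
    intro g hg
    exact ((hb2.pow_right u).mul_right (hb3.pow_right v)).coprime_dvd_right
      (hHcard ▸ Subgroup.orderOf_dvd_natCard H hg)
  -- ### K ⊔ H = ⊤
  have hKH : K ⊔ H = ⊤ := by
    obtain ⟨i', j', hKi⟩ := hK.2
    have h1 : (K ⊔ H).index ∣ K.index := Subgroup.index_dvd_of_le le_sup_left
    have h2 : (K ⊔ H).index ∣ H.index := Subgroup.index_dvd_of_le le_sup_right
    have hcop' : Nat.Coprime K.index H.index := by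
      rw [hKi]
      exact Nat.Coprime.mul
        (((hH.2.coprime_dvd_right (by norm_num : (2:ℕ) ∣ 6)).symm).pow_left i')
        (((hH.2.coprime_dvd_right (by norm_num : (3:ℕ) ∣ 6)).symm).pow_left j')
    have := Nat.dvd_gcd h1 h2
    rw [hcop'] at this
    exact Subgroup.index_eq_one.mp (Nat.dvd_one.mp this)
  -- ### A := zpowers a is normal in G
  have hconjH : ∀ h ∈ H, ∀ z ∈ Subgroup.zpowers a, h⁻¹ * z * h ∈ Subgroup.zpowers a := by
    intro h hh z hz
    have hcomm : ⁅z⁻¹, h⁻¹⁆ ∈ Subgroup.zpowers a :=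
      haH ▸ Subgroup.commutator_mem_commutator ((Subgroup.zpowers a).inv_mem hz) (H.inv_mem hh)
    have heq : h⁻¹ * z * h = z * ⁅z⁻¹, h⁻¹⁆ := by
      rw [commutatorElement_def]; group
    rw [heq]
    exact Subgroup.mul_mem _ hz hcomm
  have hconjK : ∀ k ∈ K, ∀ z ∈ Subgroup.zpowers a, k⁻¹ * z * k ∈ Subgroup.zpowers a := by
    intro k hk
    have hle : ⁅K, H⁆ ≤ Subgroup.comap (MulAut.conj k⁻¹).toMonoidHom (Subgroup.zpowers a) := by
      rw [Subgroup.commutator_le]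
      intro k' hk' h hh
      rw [Subgroup.mem_comap]
      have key : (MulAut.conj k⁻¹).toMonoidHom ⁅k', h⁆ = ⁅k⁻¹ * k', h⁆ * ⁅k⁻¹, h⁆⁻¹ := by
        simp only [MulEquiv.coe_toMonoidHom, MulAut.conj_apply, inv_inv,
          commutatorElement_def]
        group
      rw [key]
      exact Subgroup.mul_mem _
        (haKH ▸ Subgroup.commutator_mem_commutator (K.mul_mem (K.inv_mem hk) hk') hh)
        (Subgroup.inv_mem _ (haKH ▸ Subgroup.commutator_mem_commutator (K.inv_mem hk) hh))
    intro z hz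
    have hz' : z ∈ ⁅K, H⁆ := haKH ▸ hz
    have := hle hz'
    rw [Subgroup.mem_comap] at this
    simpa only [MulEquiv.coe_toMonoidHom, MulAut.conj_apply, inv_inv] using this
  haveI hAn : (Subgroup.zpowers a).Normal := by
    constructor
    intro z hz g
    have hg : g⁻¹ ∈ (K : Set G) * (H : Set G) := by
      rw [← Subgroup.normal_mul K H, hKH]
      exact Subgroup.mem_top g⁻¹
    obtain ⟨k, hk, h, hh, hkh⟩ := hg
    have hgeq : g = h⁻¹ * k⁻¹ := by
      have : g⁻¹ = k * h := hkh.symm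
      rw [← inv_inv g, this, mul_inv_rev]
    rw [hgeq]
    have : h⁻¹ * k⁻¹ * z * (h⁻¹ * k⁻¹)⁻¹ = h⁻¹ * (k⁻¹ * z * k) * h := by group
    rw [this]
    exact hconjH h hh _ (hconjK k hk z hz)
  -- conj of a-powers stays in zpowers a
  have hconj_mem : ∀ g z : G, z ∈ Subgroup.zpowers a → g * z * g⁻¹ ∈ Subgroup.zpowers a :=
    fun g z hz => hAn.conj_mem z hz g
  -- ### Commutator [ρ₀, τ₀] commutes with a
  have hTa : τ₀ * a * τ₀⁻¹ = a⁻¹ := by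
    have h1 : τ₀ * (τ₀⁻¹ * a * τ₀) * τ₀⁻¹ = τ₀ * a⁻¹ * τ₀⁻¹ := by rw [hinv]
    have h2 : τ₀ * (τ₀⁻¹ * a * τ₀) * τ₀⁻¹ = a := by group
    have h3 : τ₀ * a⁻¹ * τ₀⁻¹ = a := h1.symm.trans h2
    calc τ₀ * a * τ₀⁻¹ = (τ₀ * a⁻¹ * τ₀⁻¹)⁻¹ := by group
      _ = a⁻¹ := by rw [h3]
  have hra : Commute a (ρ₀⁻¹ * τ₀⁻¹ * ρ₀ * τ₀) := by
    obtain ⟨kρ, hkρ⟩ := Subgroup.mem_zpowers_iff.mp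
      (hconj_mem ρ₀ a (Subgroup.mem_zpowers a))
    -- hkρ : a ^ kρ = ρ₀ * a * ρ₀⁻¹
    have hback : ρ₀⁻¹ * a ^ kρ * ρ₀ = a := by rw [hkρ]; group
    have he3 : τ₀⁻¹ * a ^ kρ * τ₀ = (a ^ kρ)⁻¹ := by
      have hcz : (τ₀⁻¹ * a * τ₀⁻¹⁻¹) ^ kρ = τ₀⁻¹ * a ^ kρ * τ₀⁻¹⁻¹ := conj_zpow
      rw [inv_inv] at hcz
      rw [← hcz, hinv, inv_zpow]
    have hstep : (ρ₀⁻¹ * τ₀⁻¹ * ρ₀ * τ₀) * a * (ρ₀⁻¹ * τ₀⁻¹ * ρ₀ * τ₀)⁻¹ = a := by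
      have e1 : (ρ₀⁻¹ * τ₀⁻¹ * ρ₀ * τ₀) * a * (ρ₀⁻¹ * τ₀⁻¹ * ρ₀ * τ₀)⁻¹
          = ρ₀⁻¹ * (τ₀⁻¹ * (ρ₀ * (τ₀ * a * τ₀⁻¹) * ρ₀⁻¹) * τ₀) * ρ₀ := by group
      have e2 : ρ₀ * a⁻¹ * ρ₀⁻¹ = (a ^ kρ)⁻¹ := by rw [hkρ]; group
      have e4 : τ₀⁻¹ * (a ^ kρ)⁻¹ * τ₀ = a ^ kρ := by
        have : τ₀⁻¹ * (a ^ kρ)⁻¹ * τ₀ = (τ₀⁻¹ * a ^ kρ * τ₀)⁻¹ := by group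
        rw [this, he3, inv_inv]
      rw [e1, hTa, e2, e4, hback]
    have : (ρ₀⁻¹ * τ₀⁻¹ * ρ₀ * τ₀) * a = a * (ρ₀⁻¹ * τ₀⁻¹ * ρ₀ * τ₀) := by
      conv_rhs => rw [← hstep]
      group
    exact this.symm
  -- ### Part 2
  have hrmem : ρ₀⁻¹ * τ₀⁻¹ * ρ₀ * τ₀ ∈ H :=
    H.mul_mem (H.mul_mem (H.mul_mem (H.inv_mem hρ₀) (H.inv_mem hτ₀)) hρ₀) hτ₀
  have hconjord : ∀ g z : G, orderOf (g⁻¹ * z * g) = orderOf z := by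
    intro g z
    have := orderOf_injective (MulAut.conj g⁻¹).toMonoidHom
      (MulEquiv.injective _) z
    simpa only [MulEquiv.coe_toMonoidHom, MulAut.conj_apply, inv_inv] using this
  have part2 : orderOf ((a ^ i * b ^ j * ρ₀)⁻¹ * τ₀⁻¹ * (a ^ i * b ^ j * ρ₀) * τ₀) =
      orderOf a * orderOf (ρ₀⁻¹ * τ₀⁻¹ * ρ₀ * τ₀) := by
    have hsemi_a : τ₀⁻¹ * a ^ i = (a ^ i)⁻¹ * τ₀⁻¹ := by
      have hcp : (τ₀⁻¹ * a * τ₀⁻¹⁻¹) ^ i = τ₀⁻¹ * a ^ i * τ₀⁻¹⁻¹ := conj_pow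
      rw [inv_inv] at hcp
      rw [hinv] at hcp
      have h' : τ₀⁻¹ * a ^ i * τ₀ = (a ^ i)⁻¹ := by rw [← hcp, inv_pow]
      calc τ₀⁻¹ * a ^ i = (τ₀⁻¹ * a ^ i * τ₀) * τ₀⁻¹ := by group
        _ = (a ^ i)⁻¹ * τ₀⁻¹ := by rw [h']
    have hsemi_b : τ₀⁻¹ * b ^ j = b ^ j * τ₀⁻¹ :=
      (((hbcent τ₀ hτ₀).pow_left j).inv_right.symm).eq
    have hy : (a ^ i * b ^ j * ρ₀)⁻¹ * τ₀⁻¹ * (a ^ i * b ^ j * ρ₀) * τ₀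
        = ((b ^ j * ρ₀)⁻¹ * (a ^ i * a ^ i)⁻¹ * (b ^ j * ρ₀)) * (ρ₀⁻¹ * τ₀⁻¹ * ρ₀ * τ₀) := by
      calc (a ^ i * b ^ j * ρ₀)⁻¹ * τ₀⁻¹ * (a ^ i * b ^ j * ρ₀) * τ₀
          = (a ^ i * b ^ j * ρ₀)⁻¹ * ((τ₀⁻¹ * a ^ i) * b ^ j * ρ₀) * τ₀ := by group
        _ = (a ^ i * b ^ j * ρ₀)⁻¹ * (((a ^ i)⁻¹ * τ₀⁻¹) * b ^ j * ρ₀) * τ₀ := by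
            rw [hsemi_a]
        _ = (a ^ i * b ^ j * ρ₀)⁻¹ * ((a ^ i)⁻¹ * (τ₀⁻¹ * b ^ j) * ρ₀) * τ₀ := by group
        _ = (a ^ i * b ^ j * ρ₀)⁻¹ * ((a ^ i)⁻¹ * (b ^ j * τ₀⁻¹) * ρ₀) * τ₀ := by
            rw [hsemi_b]
        _ = ((b ^ j * ρ₀)⁻¹ * (a ^ i * a ^ i)⁻¹ * (b ^ j * ρ₀)) * (ρ₀⁻¹ * τ₀⁻¹ * ρ₀ * τ₀) := by
            group
    have hword : orderOf ((b ^ j * ρ₀)⁻¹ * (a ^ i * a ^ i)⁻¹ * (b ^ j * ρ₀)) = orderOf a := by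
      rw [hconjord, orderOf_inv]
      have h2i : a ^ i * a ^ i = a ^ (2 * i) := by rw [two_mul, pow_add]
      rw [h2i]
      exact Nat.Coprime.orderOf_pow (hm2.mul_right (Nat.coprime_comm.mp hi))
    have hwmem : (b ^ j * ρ₀)⁻¹ * (a ^ i * a ^ i)⁻¹ * (b ^ j * ρ₀) ∈ Subgroup.zpowers a := by
      have hmem : (a ^ i * a ^ i)⁻¹ ∈ Subgroup.zpowers a :=
        Subgroup.inv_mem _ (Subgroup.mul_mem _
          (Subgroup.pow_mem _ (Subgroup.mem_zpowers a) i)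
          (Subgroup.pow_mem _ (Subgroup.mem_zpowers a) i))
      have := hconj_mem (b ^ j * ρ₀)⁻¹ _ hmem
      simpa only [inv_inv] using this
    obtain ⟨z, hz⟩ := Subgroup.mem_zpowers_iff.mp hwmem
    have hcomm : Commute ((b ^ j * ρ₀)⁻¹ * (a ^ i * a ^ i)⁻¹ * (b ^ j * ρ₀))
        (ρ₀⁻¹ * τ₀⁻¹ * ρ₀ * τ₀) := by
      rw [← hz]
      exact hra.zpow_left z
    have hcop2 : Nat.Coprime (orderOf ((b ^ j * ρ₀)⁻¹ * (a ^ i * a ^ i)⁻¹ * (b ^ j * ρ₀)))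
        (orderOf (ρ₀⁻¹ * τ₀⁻¹ * ρ₀ * τ₀)) := by
      rw [hword]; exact hmH _ hrmem
    rw [hy, Commute.orderOf_mul_eq_mul_orderOf_of_coprime hcomm hcop2, hword]
  -- ### Part 1
  refine ⟨?_, part2⟩
  rw [mul_assoc]
  set c := b ^ j * ρ₀ with hcdef
  have hCb : Commute b ρ₀ := hbcent ρ₀ hρ₀
  have hobj : orderOf (b ^ j) = orderOf b :=
    Nat.Coprime.orderOf_pow (Nat.coprime_comm.mp hj)
  have hcopbρ : Nat.Coprime (orderOf b) (orderOf ρ₀) := hbH ρ₀ hρ₀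
  have hn : orderOf c = orderOf b * orderOf ρ₀ := by
    rw [hcdef, Commute.orderOf_mul_eq_mul_orderOf_of_coprime (hCb.pow_left j)
      (by rw [hobj]; exact hcopbρ), hobj]
  have hnbρ : orderOf (b * ρ₀) = orderOf b * orderOf ρ₀ :=
    Commute.orderOf_mul_eq_mul_orderOf_of_coprime hCb hcopbρ
  obtain ⟨k, hk1, hk2⟩ := Nat.chineseRemainder hcopbρ j 1
  have hcK : (b * ρ₀) ^ k = c := by
    rw [hcdef, hCb.mul_pow, pow_eq_pow_iff_modEq.mpr hk1, pow_eq_pow_iff_modEq.mpr hk2,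
      pow_one]
  have hkcop : Nat.Coprime k (orderOf b * orderOf ρ₀) :=
    Nat.Coprime.mul_right ((Nat.ModEq.gcd_eq hk1).trans hj)
      ((Nat.ModEq.gcd_eq hk2).trans (Nat.gcd_one_left _))
  have hbρ_pow : ∃ k' : ℕ, c ^ k' = b * ρ₀ := by
    rcases Nat.lt_or_ge 1 (orderOf b * orderOf ρ₀) with hlt | hle
    · obtain ⟨k', -, hk'⟩ := Nat.exists_mul_mod_eq_one_of_coprime hkcop hlt
      refine ⟨k', ?_⟩
      rw [← hcK, ← pow_mul]
      calc (b * ρ₀) ^ (k * k') = (b * ρ₀) ^ (k * k' % orderOf (b * ρ₀)) :=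
            (pow_mod_orderOf _ _).symm
        _ = (b * ρ₀) ^ 1 := by rw [hnbρ, hk']
        _ = b * ρ₀ := pow_one _
    · have h1 : orderOf (b * ρ₀) = 1 := by
        have pos := orderOf_pos (b * ρ₀)
        omega
      exact ⟨0, by rw [pow_zero, (orderOf_eq_one_iff.mp h1)]⟩
  have hcommute_bρ : ∀ z : G, Commute z c → Commute z (b * ρ₀) := by
    intro z hzc
    obtain ⟨k', hk'⟩ := hbρ_pow
    rw [← hk']
    exact hzc.pow_right k'
  -- conjugation action of c on a
  obtain ⟨s, hs⟩ := Subgroup.mem_zpowers_iff.mp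
    (hconj_mem c a (Subgroup.mem_zpowers a))
  have hconjk : ∀ m : ℕ, c ^ m * a * (c ^ m)⁻¹ = a ^ (s ^ m) := by
    intro m
    induction m with
    | zero => simp
    | succ m ih =>
      have e1 : c ^ (m + 1) * a * (c ^ (m + 1))⁻¹ = c * (c ^ m * a * (c ^ m)⁻¹) * c⁻¹ := by
        group
      rw [e1, ih]
      have e2 : c * a ^ (s ^ m) * c⁻¹ = (c * a * c⁻¹) ^ (s ^ m) := conj_zpow.symm
      rw [e2, ← hs, ← zpow_mul]
      congr 1
      rw [pow_succ]
      ring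
  have hxpow : ∀ m : ℕ, (a ^ i * c) ^ m
      = a ^ ((i : ℤ) * ∑ t ∈ Finset.range m, s ^ t) * c ^ m := by
    intro m
    induction m with
    | zero => simp
    | succ m ih =>
      rw [pow_succ, ih]
      have e2 : c ^ m * a ^ i * (c ^ m)⁻¹ = a ^ (s ^ m * (i : ℤ)) := by
        have h3 : c ^ m * a ^ i * (c ^ m)⁻¹ = (c ^ m * a * (c ^ m)⁻¹) ^ i := conj_pow.symm
        rw [h3, hconjk m, ← zpow_natCast (a ^ (s ^ m)) i, ← zpow_mul]
      have e3 : (i : ℤ) * ∑ t ∈ Finset.range m, s ^ t + s ^ m * (i : ℤ)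
          = (i : ℤ) * ∑ t ∈ Finset.range (m + 1), s ^ t := by
        rw [Finset.sum_range_succ, mul_add]; ring
      calc a ^ ((i : ℤ) * ∑ t ∈ Finset.range m, s ^ t) * c ^ m * (a ^ i * c)
          = a ^ ((i : ℤ) * ∑ t ∈ Finset.range m, s ^ t)
            * (c ^ m * a ^ i * (c ^ m)⁻¹) * (c ^ m * c) := by simp [mul_assoc]
        _ = a ^ ((i : ℤ) * ∑ t ∈ Finset.range m, s ^ t) * a ^ (s ^ m * (i : ℤ))
            * (c ^ m * c) := by rw [e2]
        _ = a ^ ((i : ℤ) * ∑ t ∈ Finset.range (m + 1), s ^ t) * c ^ (m + 1) := by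
            rw [← zpow_add, e3, pow_succ]
  have hc1 : c ^ (orderOf b * orderOf ρ₀) = 1 := by
    rw [← hn]; exact pow_orderOf_eq_one c
  have hxn : (a ^ i * c) ^ (orderOf b * orderOf ρ₀)
      = a ^ ((i : ℤ) * ∑ t ∈ Finset.range (orderOf b * orderOf ρ₀), s ^ t) := by
    rw [hxpow, hc1, mul_one]
  -- the order of x is divisible by orderOf b * orderOf ρ₀
  have hceA : ∀ e : ℕ, c ^ e ∈ Subgroup.zpowers a → c ^ e = 1 := by
    intro e he
    have h1 : orderOf (c ^ e) ∣ orderOf a := orderOf_dvd_of_mem_zpowers he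
    have h2 : orderOf (c ^ e) ∣ orderOf b * orderOf ρ₀ := hn ▸ orderOf_pow_dvd e
    have hcopmn : Nat.Coprime (orderOf a) (orderOf b * orderOf ρ₀) :=
      hcop.mul_right (hmH ρ₀ hρ₀)
    exact orderOf_eq_one_iff.mp
      ((Nat.Coprime.coprime_dvd_left h1 hcopmn).eq_one_of_dvd h2)
  have hnx : orderOf b * orderOf ρ₀ ∣ orderOf (a ^ i * c) := by
    have h1 : orderOf (QuotientGroup.mk' (Subgroup.zpowers a) (a ^ i * c))
        ∣ orderOf (a ^ i * c) := orderOf_map_dvd _ _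
    have hπa : QuotientGroup.mk' (Subgroup.zpowers a) (a ^ i) = 1 := by
      rw [QuotientGroup.mk'_apply, QuotientGroup.eq_one_iff]
      exact Subgroup.pow_mem _ (Subgroup.mem_zpowers a) i
    have hπx : QuotientGroup.mk' (Subgroup.zpowers a) (a ^ i * c)
        = QuotientGroup.mk' (Subgroup.zpowers a) c := by
      rw [map_mul, hπa, one_mul]
    rw [hπx] at h1
    have h2 : QuotientGroup.mk' (Subgroup.zpowers a)
        (c ^ orderOf (QuotientGroup.mk' (Subgroup.zpowers a) c)) = 1 := by
      rw [map_pow]; exact pow_orderOf_eq_one _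
    rw [QuotientGroup.mk'_apply, QuotientGroup.eq_one_iff] at h2
    have h3 : c ^ orderOf (QuotientGroup.mk' (Subgroup.zpowers a) c) = 1 := hceA _ h2
    have h4 : orderOf c ∣ orderOf (QuotientGroup.mk' (Subgroup.zpowers a) c) :=
      orderOf_dvd_of_pow_eq_one h3
    rw [hn] at h4
    exact h4.trans h1
  have hxt : orderOf (a ^ i * c)
      = (orderOf b * orderOf ρ₀) * orderOf ((a ^ i * c) ^ (orderOf b * orderOf ρ₀)) := by
    rw [orderOf_pow (a ^ i * c), Nat.gcd_eq_right hnx]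
    exact (Nat.mul_div_cancel' hnx).symm
  -- identification of the order of x ^ (orderOf b * orderOf ρ₀)
  have hiS : a ^ ((i : ℤ) * ∑ t ∈ Finset.range (orderOf b * orderOf ρ₀), s ^ t)
      = (a ^ (∑ t ∈ Finset.range (orderOf b * orderOf ρ₀), s ^ t)) ^ i := by
    rw [mul_comm, zpow_mul, zpow_natCast]
  have hordS : orderOf (a ^ (∑ t ∈ Finset.range (orderOf b * orderOf ρ₀), s ^ t))
      ∣ orderOf a :=
    orderOf_dvd_of_mem_zpowers (Subgroup.mem_zpowers_iff.mpr ⟨_, rfl⟩)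
  have ht_eq : orderOf ((a ^ i * c) ^ (orderOf b * orderOf ρ₀))
      = orderOf (a ^ (∑ t ∈ Finset.range (orderOf b * orderOf ρ₀), s ^ t)) := by
    rw [hxn, hiS]
    exact Nat.Coprime.orderOf_pow
      (Nat.Coprime.coprime_dvd_left hordS (Nat.coprime_comm.mp hi))
  -- x ^ (orderOf b * orderOf ρ₀) lies in the centralizer part
  have hxnA : (a ^ i * c) ^ (orderOf b * orderOf ρ₀) ∈ Subgroup.zpowers a := by
    rw [hxn]; exact Subgroup.mem_zpowers_iff.mpr ⟨_, rfl⟩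
  have hxncommc : Commute ((a ^ i * c) ^ (orderOf b * orderOf ρ₀)) c := by
    have h1 : Commute ((a ^ i * c) ^ (orderOf b * orderOf ρ₀)) (a ^ i * c) :=
      (Commute.refl _).pow_left _
    have h2 : Commute ((a ^ i * c) ^ (orderOf b * orderOf ρ₀)) (a ^ i) := by
      obtain ⟨z, hz⟩ := Subgroup.mem_zpowers_iff.mp hxnA
      rw [← hz]
      exact ((Commute.refl a).pow_right i).zpow_left z
    have h3 : Commute ((a ^ i * c) ^ (orderOf b * orderOf ρ₀)) ((a ^ i)⁻¹ * (a ^ i * c)) :=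
      (h2.inv_right).mul_right h1
    simpa using h3
  have hxnmem : (a ^ i * c) ^ (orderOf b * orderOf ρ₀) ∈ Subgroup.zpowers a' := by
    rw [ha']
    refine Subgroup.mem_inf.mpr ⟨hxnA, ?_⟩
    rw [Subgroup.mem_centralizer_iff]
    intro g hg
    obtain ⟨z, hz⟩ := Subgroup.mem_zpowers_iff.mp hg
    rw [← hz]
    exact (((hcommute_bρ _ hxncommc).zpow_right z).symm).eq
  have ht_dvd : orderOf ((a ^ i * c) ^ (orderOf b * orderOf ρ₀)) ∣ orderOf a' :=
    orderOf_dvd_of_mem_zpowers hxnmem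
  -- a' is a power of a fixed by c, and the reverse divisibility
  have ha'mem : a' ∈ Subgroup.zpowers a
      ⊓ Subgroup.centralizer (Subgroup.zpowers (b * ρ₀) : Set G) := by
    rw [← ha']; exact Subgroup.mem_zpowers a'
  have ha'A : a' ∈ Subgroup.zpowers a := ha'mem.1
  have ha'c : Commute a' c := by
    have h1 : Commute a' (b * ρ₀) :=
      Commute.symm (Subgroup.mem_centralizer_iff.mp ha'mem.2 _ (Subgroup.mem_zpowers _))
    rw [← hcK]
    exact h1.pow_right k
  obtain ⟨w, hw⟩ := Subgroup.mem_zpowers_iff.mp ha'A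
  have hnorm : ∀ m : ℕ, a ^ (w * ∑ t ∈ Finset.range m, s ^ t) = a' ^ m := by
    intro m
    induction m with
    | zero => simp
    | succ m ih =>
      rw [Finset.sum_range_succ, mul_add, zpow_add, ih, pow_succ]
      congr 1
      calc a ^ (w * s ^ m) = (a ^ (s ^ m)) ^ w := by rw [mul_comm, zpow_mul]
        _ = (c ^ m * a * (c ^ m)⁻¹) ^ w := by rw [hconjk m]
        _ = c ^ m * a ^ w * (c ^ m)⁻¹ := conj_zpow
        _ = c ^ m * a' * (c ^ m)⁻¹ := by rw [hw]
        _ = a' := by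
            have h5 := (ha'c.pow_right m).eq
            rw [← h5, mul_inv_cancel_right]
  have hcopa'n : Nat.Coprime (orderOf a') (orderOf b * orderOf ρ₀) :=
    Nat.Coprime.coprime_dvd_left (orderOf_dvd_of_mem_zpowers ha'A)
      (hcop.mul_right (hmH ρ₀ hρ₀))
  have ha'n : a' ^ (orderOf b * orderOf ρ₀)
      = (a ^ (∑ t ∈ Finset.range (orderOf b * orderOf ρ₀), s ^ t)) ^ w := by
    rw [← hnorm (orderOf b * orderOf ρ₀), mul_comm w _, zpow_mul]
  have hdvd1 : orderOf a'
      ∣ orderOf (a ^ (∑ t ∈ Finset.range (orderOf b * orderOf ρ₀), s ^ t)) := by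
    have h1 : orderOf (a' ^ (orderOf b * orderOf ρ₀)) = orderOf a' :=
      Nat.Coprime.orderOf_pow hcopa'n
    rw [← h1, ha'n]
    exact orderOf_dvd_of_mem_zpowers (Subgroup.mem_zpowers_iff.mpr ⟨w, rfl⟩)
  have hteq : orderOf ((a ^ i * c) ^ (orderOf b * orderOf ρ₀)) = orderOf a' :=
    Nat.dvd_antisymm ht_dvd (by rw [ht_eq]; exact hdvd1)
  rw [hxt, hteq, Nat.mul_comm]
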